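/- Let R be a principal ideal domain, P a finitely generated R-module, and M_1 ⊇ M_2 ⊇ M_3 ⊇ ... a descending chain of submodules of P such that for each n there is an R-module homomorphism r_n : P → M_n restricting to the identity on M_{n+1} (i.e., M_{n+1} is a retract of P inside M_n). Then the chain stabilizes: there exists k with M_n = M_k for all n ≥ k. -/

import Mathlib

open Submodule

private lemma isArtinian_quotient_span_singleton
    {R : Type*} [CommRing R] [IsDomain R] [IsPrincipalIdealRing R]
    {a : R} (ha : a ≠ 0) : IsArtinian R (R ⧸ Ideal.span {a}) := by
  have hfin : Finite {J : Submodule R R // Ideal.span {a} ≤ J} := by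
    haveI : Fintype {x : Associates R // x ∣ Associates.mk a} :=
      UniqueFactorizationMonoid.fintypeSubtypeDvd _ (by simpa using ha)
    refine Finite.of_injective (fun J =>
      (⟨Associates.mk (Submodule.IsPrincipal.generator (J : Submodule R R)),
        Associates.mk_dvd_mk.mpr (Ideal.mem_span_singleton.mp
          (by rw [Ideal.span_singleton_generator]; exact J.2 (Ideal.mem_span_singleton_self a)))⟩ :
        {x : Associates R // x ∣ Associates.mk a})) ?_
    rintro ⟨J, hJ⟩ ⟨K, hK⟩ h
    have h' : Associated (Submodule.IsPrincipal.generator J)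
        (Submodule.IsPrincipal.generator K) := Associates.mk_eq_mk_iff_associated.mp
      (congrArg Subtype.val h)
    have h2 : Ideal.span {Submodule.IsPrincipal.generator J}
        = Ideal.span {Submodule.IsPrincipal.generator K} :=
      Ideal.span_singleton_eq_span_singleton.mpr h'
    rw [Ideal.span_singleton_generator, Ideal.span_singleton_generator] at h2
    exact Subtype.ext h2
  have : Finite (Submodule R (R ⧸ Ideal.span {a})) :=
    @Finite.of_equiv _ _ hfin (Submodule.comapMkQRelIso (Ideal.span {a})).toEquiv.symm
  exact Finite.to_wellFoundedLT

private lemma isArtinian_of_isTorsion_pid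
    {R P : Type*} [CommRing R] [IsDomain R] [IsPrincipalIdealRing R]
    [AddCommGroup P] [Module R P] [Module.Finite R P] (h : Module.IsTorsion R P) :
    IsArtinian R P := by
  obtain ⟨n, s, hs⟩ := Module.Finite.exists_fin (R := R) (M := P)
  choose f hf using fun i => @h (s i)
  set a : R := ∏ i, (f i : R) with ha_def
  have ha : a ≠ 0 := by
    rw [ha_def]
    exact Finset.prod_ne_zero_iff.mpr fun i _ => nonZeroDivisors.coe_ne_zero (f i)
  have hkill : ∀ x : P, a • x = 0 := by
    intro x
    have hx : x ∈ Submodule.span R (Set.range s) := by rw [hs]; trivial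
    induction hx using Submodule.span_induction with
    | mem x hx =>
      obtain ⟨i, rfl⟩ := hx
      have : a = (∏ j ∈ Finset.univ.erase i, (f j : R)) * (f i : R) := by
        rw [ha_def, ← Finset.prod_erase_mul _ _ (Finset.mem_univ i)]
      rw [this, mul_smul, show (f i : R) • s i = 0 from hf i, smul_zero]
    | zero => simp
    | add x y _ _ hx hy => rw [smul_add, hx, hy, add_zero]
    | smul c x _ hx => rw [smul_comm, hx, smul_zero]
  haveI := isArtinian_quotient_span_singleton ha
  let c : Fin n → (R ⧸ Ideal.span {a}) →ₗ[R] P := fun i =>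
    Submodule.liftQ (Ideal.span {a}) (LinearMap.toSpanSingleton R P (s i))
      (by
        rw [Ideal.span_le]
        rintro x rfl
        simp only [SetLike.mem_coe, LinearMap.mem_ker, LinearMap.toSpanSingleton_apply]
        exact hkill (s _))
  let F : (Fin n → R ⧸ Ideal.span {a}) →ₗ[R] P := LinearMap.lsum R _ R c
  have hF : Function.Surjective F := by
    intro x
    have hx : x ∈ Submodule.span R (Set.range s) := by rw [hs]; trivial
    obtain ⟨co, hco⟩ := (mem_span_range_iff_exists_fun R).mp hx
    refine ⟨fun i => Submodule.Quotient.mk (co i), ?_⟩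
    rw [← hco]
    have key : ∀ i : Fin n, (c i) (Submodule.Quotient.mk (co i)) = co i • s i := fun i => by
      rw [show (c i) (Submodule.Quotient.mk (co i))
          = LinearMap.toSpanSingleton R P (s i) (co i) from Submodule.liftQ_apply _ _ _]
      simp [LinearMap.toSpanSingleton_apply]
    simp only [F, LinearMap.lsum_apply, LinearMap.sum_apply, LinearMap.comp_apply,
      LinearMap.proj_apply]
    exact Finset.sum_congr rfl fun i _ => key i
  exact isArtinian_of_surjective _ F hF

/-- The saturation of a submodule. -/
private def satMod {R P : Type*} [CommRing R] [IsDomain R] [AddCommGroup P] [Module R P]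
    (N : Submodule R P) : Submodule R P where
  carrier := {x | ∃ a : R, a ≠ 0 ∧ a • x ∈ N}
  add_mem' := by
    rintro x y ⟨a, ha, hax⟩ ⟨b, hb, hby⟩
    refine ⟨a * b, mul_ne_zero ha hb, ?_⟩
    rw [smul_add]
    exact N.add_mem (by rw [mul_comm, mul_smul]; exact N.smul_mem b hax)
      (by rw [mul_smul]; exact N.smul_mem a hby)
  zero_mem' := ⟨1, one_ne_zero, by simp⟩
  smul_mem' := by
    rintro c x ⟨a, ha, hax⟩
    exact ⟨a, ha, by rw [smul_comm]; exact N.smul_mem c hax⟩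

private lemma mem_satMod {R P : Type*} [CommRing R] [IsDomain R] [AddCommGroup P] [Module R P]
    {N : Submodule R P} {x : P} : x ∈ satMod N ↔ ∃ a : R, a ≠ 0 ∧ a • x ∈ N := Iff.rfl

private lemma le_satMod {R P : Type*} [CommRing R] [IsDomain R] [AddCommGroup P] [Module R P]
    (N : Submodule R P) : N ≤ satMod N := fun x hx => ⟨1, one_ne_zero, by simpa using hx⟩

private lemma satMod_nzsd {R P : Type*} [CommRing R] [IsDomain R] [AddCommGroup P] [Module R P]
    (N : Submodule R P) : NoZeroSMulDivisors R (P ⧸ satMod N) := by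
  constructor
  intro c x h
  by_cases hc : c = 0
  · exact Or.inl hc
  · right
    obtain ⟨y, rfl⟩ := Submodule.Quotient.mk_surjective _ x
    rw [← Submodule.Quotient.mk_smul, Submodule.Quotient.mk_eq_zero] at h
    obtain ⟨a, ha, hay⟩ := h
    rw [Submodule.Quotient.mk_eq_zero]
    exact ⟨a * c, mul_ne_zero ha hc, by rwa [mul_smul]⟩

private lemma step_eq {R P : Type*} [CommRing R] [IsDomain R] [IsPrincipalIdealRing R]
    [AddCommGroup P] [Module R P] [Module.Finite R P]
    (A B : Submodule R P) (hAB : A ≤ B)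
    (hA : NoZeroSMulDivisors R (P ⧸ A)) (hB : NoZeroSMulDivisors R (P ⧸ B))
    (hrank : Module.finrank R (P ⧸ B) = Module.finrank R (P ⧸ A)) : B ≤ A := by
  haveI := hA; haveI := hB
  haveI : Module.Free R (P ⧸ A) := Module.free_of_finite_type_torsion_free'
  haveI : Module.Free R (P ⧸ B) := Module.free_of_finite_type_torsion_free'
  let π : (P ⧸ A) →ₗ[R] (P ⧸ B) := Submodule.mapQ A B LinearMap.id (by simpa using hAB)
  have hπmk : ∀ x : P, π (Submodule.Quotient.mk x) = Submodule.Quotient.mk x := fun x =>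
    Submodule.mapQ_apply _ _ _ x
  have hπs : Function.Surjective π := by
    intro y
    obtain ⟨x, rfl⟩ := Submodule.Quotient.mk_surjective B y
    exact ⟨Submodule.Quotient.mk x, hπmk x⟩
  let b1 := Module.Free.chooseBasis R (P ⧸ A)
  let b2 := Module.Free.chooseBasis R (P ⧸ B)
  have hcard : Fintype.card (Module.Free.ChooseBasisIndex R (P ⧸ B))
      = Fintype.card (Module.Free.ChooseBasisIndex R (P ⧸ A)) := by
    rw [← Module.finrank_eq_card_chooseBasisIndex, ← Module.finrank_eq_card_chooseBasisIndex,
      hrank]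
  let e : (P ⧸ B) ≃ₗ[R] (P ⧸ A) := b2.equiv b1 (Fintype.equivOfCardEq hcard)
  have hinj : Function.Injective (e.toLinearMap ∘ₗ π) :=
    OrzechProperty.injective_of_surjective_endomorphism _
      (by exact e.surjective.comp hπs)
  have hπinj : Function.Injective π := fun x y hxy => hinj (by simp [LinearMap.comp_apply, hxy])
  intro x hx
  have h0 : π (Submodule.Quotient.mk x) = π 0 := by
    rw [map_zero, hπmk, Submodule.Quotient.mk_eq_zero]
    exact hx
  have := hπinj h0
  rwa [Submodule.Quotient.mk_eq_zero] at this

private lemma antitone_stabilizes' {R M : Type*} [Ring R] [AddCommGroup M] [Module R M]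
    [IsArtinian R M] (f : ℕ → Submodule R M) (hf : ∀ {m n : ℕ}, m ≤ n → f n ≤ f m) :
    ∃ k, ∀ n, k ≤ n → f n = f k := by
  obtain ⟨k, hk⟩ := IsArtinian.monotone_stabilizes (R := R) (M := M)
    ⟨fun n => OrderDual.toDual (f n), fun m n h => hf h⟩
  exact ⟨k, fun n hn => congrArg OrderDual.ofDual (hk n hn).symm⟩

/-- Descending chains of submodules of a finitely generated module over a PID,
each of which is a retract of the ambient module inside the previous one,
stabilize. -/
theorem fg_module_retract_chain_stabilizes
    {R : Type*} [CommRing R] [IsDomain R] [IsPrincipalIdealRing R]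
    {P : Type*} [AddCommGroup P] [Module R P] [Module.Finite R P]
    (M : ℕ → Submodule R P) (hdesc : ∀ n, M (n + 1) ≤ M n)
    (r : ℕ → (P →ₗ[R] P))
    (hrange : ∀ n, LinearMap.range (r n) ≤ M n)
    (hfix : ∀ n, ∀ x ∈ M (n + 1), r n x = x) :
    ∃ k, ∀ n ≥ k, M n = M k := by
  classical
  have hmono : ∀ {m n : ℕ}, m ≤ n → M n ≤ M m := by
    intro m n h
    induction h with
    | refl => exact le_refl _
    | step _ ih => exact le_trans (hdesc _) ih
  set T : Submodule R P := Submodule.torsion R P with hTdef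
  haveI : Module.Finite R ↥T := Module.Finite.iff_fg.mpr (IsNoetherian.noetherian T)
  haveI hTart : IsArtinian R ↥T := isArtinian_of_isTorsion_pid (Submodule.torsion_isTorsion)
  -- torsion chain stabilizes
  obtain ⟨k1, hk1⟩ := antitone_stabilizes' (fun n => (M n).comap T.subtype)
    (fun {m n} h => Submodule.comap_mono (hmono h))
  have hk1' : ∀ n, k1 ≤ n → M n ⊓ T = M k1 ⊓ T := by
    intro n hn
    have := congrArg (Submodule.map T.subtype) (hk1 n hn)
    rwa [Submodule.map_comap_subtype, Submodule.map_comap_subtype, inf_comm T (M n), inf_comm T (M k1)] at this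
  -- saturation chain
  set S : ℕ → Submodule R P := fun n => satMod (M n) with hSdef
  have hSmono : ∀ {m n : ℕ}, m ≤ n → S n ≤ S m := by
    intro m n h x hx
    obtain ⟨a, ha, hax⟩ := hx
    exact ⟨a, ha, hmono h hax⟩
  set d : ℕ → ℕ := fun n => Module.finrank R (P ⧸ S n) with hddef
  have hdmono : ∀ {m n : ℕ}, m ≤ n → d m ≤ d n := by
    intro m n h
    haveI := satMod_nzsd (M m)
    haveI := satMod_nzsd (M n)
    haveI : Module.Free R (P ⧸ S m) := Module.free_of_finite_type_torsion_free'
    haveI : Module.Free R (P ⧸ S n) := Module.free_of_finite_type_torsion_free'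
    let π : (P ⧸ S n) →ₗ[R] (P ⧸ S m) :=
      Submodule.mapQ (S n) (S m) LinearMap.id (by simpa using hSmono h)
    have hπs : Function.Surjective π := by
      intro y
      obtain ⟨x, rfl⟩ := Submodule.Quotient.mk_surjective (S m) y
      exact ⟨Submodule.Quotient.mk x, Submodule.mapQ_apply _ _ _ x⟩
    obtain ⟨σ, hσ⟩ := Module.projective_lifting_property π LinearMap.id hπs
    have hσinj : Function.Injective σ := by
      intro x y hxy
      have := congrArg π hxy
      rwa [show π (σ x) = x from congrFun (congrArg DFunLike.coe hσ) x,
        show π (σ y) = y from congrFun (congrArg DFunLike.coe hσ) y] at this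
    exact LinearMap.finrank_le_finrank_of_injective hσinj
  have hdbd : ∀ n, d n ≤ Module.finrank R P := by
    intro n
    haveI := satMod_nzsd (M n)
    haveI : Module.Free R (P ⧸ S n) := Module.free_of_finite_type_torsion_free'
    obtain ⟨σ, hσ⟩ := Module.projective_lifting_property (S n).mkQ LinearMap.id
      (Submodule.Quotient.mk_surjective (S n))
    have hσinj : Function.Injective σ := by
      intro x y hxy
      have := congrArg (S n).mkQ hxy
      rwa [show (S n).mkQ (σ x) = x from congrFun (congrArg DFunLike.coe hσ) x,
        show (S n).mkQ (σ y) = y from congrFun (congrArg DFunLike.coe hσ) y] at this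
    exact LinearMap.finrank_le_finrank_of_injective hσinj
  -- d stabilizes
  have hrange_ne : (Set.range d).Nonempty := ⟨d 0, ⟨0, rfl⟩⟩
  have hrange_bdd : BddAbove (Set.range d) := by
    refine ⟨Module.finrank R P, ?_⟩
    rintro _ ⟨n, rfl⟩
    exact hdbd n
  obtain ⟨k2, hk2⟩ : ∃ k2, d k2 = sSup (Set.range d) := Nat.sSup_mem hrange_ne hrange_bdd
  have hdk2 : ∀ n, k2 ≤ n → d n = d k2 := by
    intro n hn
    refine le_antisymm ?_ (hdmono hn)
    rw [hk2]
    exact le_csSup hrange_bdd ⟨n, rfl⟩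
  -- S stabilizes
  have hSstep : ∀ n, k2 ≤ n → S (n + 1) = S n := by
    intro n hn
    refine le_antisymm (hSmono (Nat.le_succ n)) ?_
    exact step_eq (S (n + 1)) (S n) (hSmono (Nat.le_succ n)) (satMod_nzsd _) (satMod_nzsd _)
      (by rw [show Module.finrank R (P ⧸ S n) = d n from rfl,
        show Module.finrank R (P ⧸ S (n+1)) = d (n+1) from rfl, hdk2 n hn,
        hdk2 (n+1) (le_trans hn (Nat.le_succ n))])
  have hSstab : ∀ n, k2 ≤ n → S n = S k2 := by
    intro n hn
    induction n, hn using Nat.le_induction with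
    | base => rfl
    | succ n hn ih => rw [hSstep n hn, ih]
  -- key inclusion
  have hkey : ∀ n, satMod (M (n + 1)) ≤ M n ⊔ T := by
    intro n s hs
    obtain ⟨a, ha, has⟩ := hs
    have h1 : r n (a • s) = a • s := hfix n _ has
    have h2 : a • (r n s - s) = 0 := by
      rw [smul_sub, ← map_smul, h1, sub_self]
    have hts : r n s - s ∈ T := (Submodule.mem_torsion_iff _).mpr
      ⟨⟨a, mem_nonZeroDivisors_of_ne_zero ha⟩, h2⟩
    have hrs : r n s ∈ M n := hrange n ⟨s, rfl⟩
    have : s = r n s - (r n s - s) := (sub_sub_cancel _ _).symm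
    rw [this]
    exact Submodule.sub_mem _ (Submodule.mem_sup_left hrs) (Submodule.mem_sup_right hts)
  -- conclusion
  refine ⟨max k1 k2, ?_⟩
  have hstep : ∀ n, max k1 k2 ≤ n → M n ≤ M (n + 1) := by
    intro n hn x hx
    have hxS : x ∈ S (n + 2) := by
      rw [hSstab (n + 2) (le_trans (le_max_right k1 k2) (by omega)),
        ← hSstab n (le_trans (le_max_right k1 k2) hn)]
      exact le_satMod (M n) hx
    have hxsup : x ∈ M (n + 1) ⊔ T := hkey (n + 1) hxS
    obtain ⟨m, hm, t, ht, rfl⟩ := Submodule.mem_sup.mp hxsup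
    have htMn : t ∈ M n ⊓ T := by
      constructor
      · have : t = (m + t) - m := by abel
        rw [this]
        exact Submodule.sub_mem _ hx (hmono (Nat.le_succ n) hm)
      · exact ht
    have htMn1 : t ∈ M (n + 1) ⊓ T := by
      rw [hk1' (n + 1) (le_trans (le_max_left k1 k2) (by omega))]
      rw [hk1' n (le_trans (le_max_left k1 k2) hn)] at htMn
      exact htMn
    exact Submodule.add_mem _ hm htMn1.1
  intro n hn
  refine le_antisymm (hmono hn) ?_
  induction n, hn using Nat.le_induction with
  | base => exact le_refl _
  | succ n hn ih =>
    exact le_trans ih (hstep n hn)
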